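/- Let H be a complex Hilbert space and A a von Neumann algebra on H whose commutant C = A' is abelian. Fix ξ ∈ H and let E be the orthogonal projection onto the closure of {Bξ : B ∈ C}. Let X be a bounded positive operator on H (⟨v, Xv⟩ ≥ 0 for all v ∈ H) commuting with every element of C. Then for every A ∈ A the inner product ⟨Aξ, A(E X ξ)⟩ is a nonnegative real number. (This shows that the conditional expectation defined by ε(X)Aξ = A E X ξ is a positive map.) -/

import Mathlib

open scoped ComplexInnerProductSpace ComplexOrder

/-- The orthogonal projection of `H` onto the closure of the subspace spanned by `S`,
viewed as a bounded operator on `H`. -/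
noncomputable def projCl {H : Type*} [NormedAddCommGroup H] [InnerProductSpace ℂ H]
    [CompleteSpace H] (S : Set H) : H →L[ℂ] H :=
  haveI : CompleteSpace ((Submodule.span ℂ S).topologicalClosure) :=
    ((Submodule.span ℂ S).isClosed_topologicalClosure).completeSpace_coe
  ((Submodule.span ℂ S).topologicalClosure).subtypeL.comp
    (Submodule.orthogonalProjectionOnto ((Submodule.span ℂ S).topologicalClosure))

/-- The orthogonal projection `E` onto the closure of `{Bξ : B ∈ A'}`, where `A'` is the
commutant of the von Neumann algebra `A`. -/
noncomputable def cyclicProj {H : Type*} [NormedAddCommGroup H] [InnerProductSpace ℂ H]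
    [CompleteSpace H] (A : VonNeumannAlgebra H) (ξ : H) : H →L[ℂ] H :=
  projCl ((fun B : H →L[ℂ] H => B ξ) '' (A.commutant : Set (H →L[ℂ] H)))

/-- Anything commuting with a selfadjoint element `a` commutes with continuous functions
(via `cfcHom`) of `a`.  Proved via Weierstrass approximation: polynomials in `a` commute
with `b`, and continuous functions whose image commutes with `b` form a closed subalgebra. -/
lemma commute_cfcHom_of_commute {A : Type*} [TopologicalSpace A] [Ring A] [StarRing A]
    [Algebra ℝ A] [IsTopologicalRing A] [T2Space A]
    [ClosedEmbeddingContinuousFunctionalCalculus ℝ A (IsSelfAdjoint : A → Prop)]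
    {a b : A} (ha : IsSelfAdjoint a) [CompactSpace (spectrum ℝ a)]
    (hb : Commute b a) (f : C(spectrum ℝ a, ℝ)) :
    Commute b (cfcHom ha f) := by
  let S : Subalgebra ℝ C(spectrum ℝ a, ℝ) :=
  { carrier := {g | Commute b (cfcHom ha g)}
    mul_mem' := fun {x y} hx hy => by
      have h : Commute b (cfcHom ha x * cfcHom ha y) := Commute.mul_right hx hy
      show Commute b (cfcHom ha (x * y))
      rw [map_mul]; exact h
    add_mem' := fun {x y} hx hy => by
      have h : Commute b (cfcHom ha x + cfcHom ha y) := Commute.add_right hx hy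
      show Commute b (cfcHom ha (x + y))
      rw [map_add]; exact h
    one_mem' := by
      show Commute b (cfcHom ha 1)
      rw [map_one]; exact Commute.one_right b
    zero_mem' := by
      show Commute b (cfcHom ha 0)
      rw [map_zero]; exact Commute.zero_right b
    algebraMap_mem' := fun r => by
      show Commute b (cfcHom ha (algebraMap ℝ C(spectrum ℝ a, ℝ) r))
      rw [AlgHomClass.commutes]
      exact (Algebra.commutes r b).symm }
  have hSclosed : IsClosed (S : Set C(spectrum ℝ a, ℝ)) := by
    have h := (cfcHom_isClosedEmbedding (R := ℝ) ha).continuous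
    have hcont : Continuous fun g : C(spectrum ℝ a, ℝ) =>
        b * cfcHom ha g - cfcHom ha g * b :=
      (continuous_const.mul h).sub (h.mul continuous_const)
    have hset : (S : Set C(spectrum ℝ a, ℝ)) =
        (fun g : C(spectrum ℝ a, ℝ) => b * cfcHom ha g - cfcHom ha g * b) ⁻¹' {0} := by
      ext g
      simp only [Set.mem_preimage, Set.mem_singleton_iff, sub_eq_zero]
      rfl
    rw [hset]
    exact isClosed_singleton.preimage hcont
  have hX : polynomialFunctions (spectrum ℝ a) ≤ S := by
    rw [polynomialFunctions.eq_adjoin_X]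
    apply Algebra.adjoin_le
    rintro g hg
    rw [Set.mem_singleton_iff] at hg
    subst hg
    have hId : (Polynomial.toContinuousMapOnAlgHom (spectrum ℝ a)) Polynomial.X =
        ContinuousMap.restrict (spectrum ℝ a) (ContinuousMap.id ℝ) := by
      ext x
      simp
    show Commute b (cfcHom ha ((Polynomial.toContinuousMapOnAlgHom (spectrum ℝ a)) Polynomial.X))
    rw [hId, cfcHom_id ha]
    exact hb
  have htop : (polynomialFunctions (spectrum ℝ a)).topologicalClosure ≤ S :=
    Subalgebra.topologicalClosure_minimal hX hSclosed
  rw [polynomialFunctions.topologicalClosure] at htop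
  exact htop (by trivial)

lemma commute_cfc_of_commute {A : Type*} [TopologicalSpace A] [Ring A] [StarRing A]
    [Algebra ℝ A] [IsTopologicalRing A] [T2Space A]
    [ClosedEmbeddingContinuousFunctionalCalculus ℝ A (IsSelfAdjoint : A → Prop)]
    {a b : A} (ha : IsSelfAdjoint a) [CompactSpace (spectrum ℝ a)]
    (hb : Commute b a) (f : ℝ → ℝ) (hf : ContinuousOn f (spectrum ℝ a)) :
    Commute b (cfc f a) := by
  rw [cfc_apply f a ha hf]
  exact commute_cfcHom_of_commute ha hb _

lemma norm_star_apply_eq_of_normal {H : Type*} [NormedAddCommGroup H]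
    [InnerProductSpace ℂ H] [CompleteSpace H] {D : H →L[ℂ] H}
    (hD : star D * D = D * star D) (v : H) : ‖(star D) v‖ = ‖D v‖ := by
  have h1 : ⟪D v, D v⟫ = ⟪v, (star D * D) v⟫ := by
    rw [ContinuousLinearMap.mul_apply, ContinuousLinearMap.star_eq_adjoint,
      ContinuousLinearMap.adjoint_inner_right]
  have h2 : ⟪(star D) v, (star D) v⟫ = ⟪v, (D * star D) v⟫ := by
    calc ⟪(star D) v, (star D) v⟫
        = ⟪v, (star (star D)) ((star D) v)⟫ := by
          rw [ContinuousLinearMap.star_eq_adjoint (star D),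
            ContinuousLinearMap.adjoint_inner_right]
      _ = ⟪v, (D * star D) v⟫ := by rw [star_star, ContinuousLinearMap.mul_apply]
  have h3 : ⟪(star D) v, (star D) v⟫ = ⟪D v, D v⟫ := by rw [h1, h2, hD]
  rw [norm_eq_sqrt_re_inner (𝕜 := ℂ), norm_eq_sqrt_re_inner (𝕜 := ℂ), h3]

/-- (Positivity of the conditional expectation (3.5) in Theorem 3.) If the commutant
`C = A'` is abelian, `E` the orthogonal projection onto the closure of `{Bξ : B ∈ C}`,
and `X` a bounded positive operator commuting with every element of `C`, then for every
`A ∈ A` the inner product `⟨Aξ, A (E X ξ)⟩` is a nonnegative real number. -/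
theorem cyclicProj_conditional_expectation_positive
    {H : Type*} [NormedAddCommGroup H] [InnerProductSpace ℂ H] [CompleteSpace H]
    (A : VonNeumannAlgebra H)
    (habelian : ∀ b₁ ∈ A.commutant, ∀ b₂ ∈ A.commutant, b₁ * b₂ = b₂ * b₁)
    (ξ : H) (X : H →L[ℂ] H)
    (hXpos : ∀ v : H, 0 ≤ ⟪v, X v⟫)
    (hX : ∀ B ∈ A.commutant, X * B = B * X) :
    ∀ a ∈ A, 0 ≤ ⟪a ξ, a (cyclicProj A ξ (X ξ))⟫ := by
  intro a ha
  classical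
  set S : Set H := (fun B : H →L[ℂ] H => B ξ) '' (A.commutant : Set (H →L[ℂ] H)) with hS
  set K : Submodule ℂ H := (Submodule.span ℂ S).topologicalClosure with hK
  haveI : CompleteSpace K := (Submodule.span ℂ S).isClosed_topologicalClosure.completeSpace_coe
  set E : H →L[ℂ] H := cyclicProj A ξ with hE
  have hEdef : ∀ v : H, E v = (Submodule.orthogonalProjectionOnto K v : H) := fun v => rfl
  have hEmem : ∀ v : H, E v ∈ K := fun v => by rw [hEdef]; exact (Submodule.orthogonalProjectionOnto K v).2
  have hEfix : ∀ v ∈ K, E v = v := by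
    intro v hv; rw [hEdef]; exact K.starProjection_eq_self_iff.mpr hv
  have hEzero : ∀ v ∈ Kᗮ, E v = 0 := by
    intro v hv
    rw [hEdef, Submodule.orthogonalProjectionOnto_apply_of_mem_orthogonal hv]
    rfl
  have hmemK : ∀ B ∈ A.commutant, B ξ ∈ K :=
    fun B hB => Submodule.le_topologicalClosure _ (Submodule.subset_span ⟨B, hB, rfl⟩)
  have hξK : ξ ∈ K := by simpa using hmemK 1 (one_mem A.commutant)
  have hEξ : E ξ = ξ := hEfix ξ hξK
  have hEsa : IsSelfAdjoint E := by
    rw [ContinuousLinearMap.isSelfAdjoint_iff_isSymmetric]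
    intro u v
    exact K.inner_starProjection_left_eq_right u v
  -- K is invariant under the commutant
  have hBK : ∀ B ∈ A.commutant, ∀ v ∈ K, B v ∈ K := by
    intro B hB v hv
    have hmapsTo : Set.MapsTo B (Submodule.span ℂ S : Set H) (Submodule.span ℂ S : Set H) := by
      intro x hx
      induction hx using Submodule.span_induction with
      | mem x hx =>
        obtain ⟨B', hB', rfl⟩ := hx
        exact Submodule.subset_span ⟨B * B', mul_mem hB hB', rfl⟩
      | zero => simpa using Submodule.zero_mem (Submodule.span ℂ S)
      | add x y _ _ hx hy => simpa [map_add] using Submodule.add_mem _ hx hy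
      | smul c x _ hx => simpa [map_smul] using Submodule.smul_mem _ c hx
    have hv' : v ∈ closure (Submodule.span ℂ S : Set H) := by
      rw [← Submodule.topologicalClosure_coe]; exact hv
    have : B v ∈ closure (Submodule.span ℂ S : Set H) :=
      map_mem_closure B.continuous hv' hmapsTo
    rw [← Submodule.topologicalClosure_coe] at this
    exact this
  -- E commutes with the commutant
  have hEB : ∀ B ∈ A.commutant, Commute E B := by
    intro B hB
    have key : ∀ v, E (B v) = B (E v) := by
      intro v
      have hsplit : B v = B (E v) + B (v - E v) := by rw [← map_add]; congr 1; abel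
      have h1 : E (B (E v)) = B (E v) := hEfix _ (hBK B hB _ (hEmem v))
      have hw : v - E v ∈ Kᗮ := by
        have := Submodule.sub_starProjection_mem_orthogonal (K := K) v
        exact this
      have hBw : B (v - E v) ∈ Kᗮ := by
        rw [Submodule.mem_orthogonal]
        intro u hu
        have hsu : (star B) u ∈ K := hBK _ (star_mem hB) u hu
        calc ⟪u, B (v - E v)⟫ = ⟪(ContinuousLinearMap.adjoint B) u, v - E v⟫ := by
              rw [ContinuousLinearMap.adjoint_inner_left]
          _ = ⟪(star B) u, v - E v⟫ := by rw [ContinuousLinearMap.star_eq_adjoint]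
          _ = 0 := (Submodule.mem_orthogonal K _).mp hw _ hsu
      have h2 : E (B (v - E v)) = 0 := hEzero _ hBw
      calc E (B v) = E (B (E v)) + E (B (v - E v)) := by rw [hsplit, map_add]
        _ = B (E v) := by rw [h1, h2, add_zero]
    exact ContinuousLinearMap.ext fun v => key v
  -- a commutes with the commutant
  have haB : ∀ B ∈ A.commutant, Commute a B := by
    intro B hB
    have ha' : a ∈ A.commutant.commutant := by rw [A.commutant_commutant]; exact ha
    exact ((VonNeumannAlgebra.mem_commutant_iff.mp ha') B hB).symm
  -- the positive operator T = (aE)^* (aE)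
  set T : H →L[ℂ] H := star (a * E) * (a * E) with hT
  have hTnonneg : (0 : H →L[ℂ] H) ≤ T := star_mul_self_nonneg _
  have hTsa : IsSelfAdjoint T := IsSelfAdjoint.star_mul_self _
  have hTB : ∀ B ∈ A.commutant, Commute B T := by
    intro B hB
    have h1 : Commute B (a * E) := ((haB B hB).symm).mul_right (hEB B hB).symm
    have h2 : Commute B (star (a * E)) := by
      have := (((haB _ (star_mem hB)).symm).mul_right (hEB _ (star_mem hB)).symm).star_star
      simpa using this
    exact h2.mul_right h1
  have hEidem : E * E = E := ContinuousLinearMap.ext fun v => hEfix _ (hEmem v)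
  have hstarAE : star (a * E) = E * star a := by
    rw [star_mul, hEsa.star_eq]
  have hTE : Commute E T := by
    have hTe : T * E = T := by
      ext v
      show T (E v) = T v
      have h' : E (E v) = E v := hEfix _ (hEmem v)
      simp only [hT, ContinuousLinearMap.mul_apply, h']
    have heT : E * T = T := by
      ext v
      show E (T v) = T v
      have hTv : T v = E ((star a) (a (E v))) := by rw [hT, hstarAE]; rfl
      rw [hTv]
      exact hEfix _ (hEmem _)
    rw [Commute, SemiconjBy, hTe, heT]
  -- the square root of T
  have hsqrtCont : ContinuousOn Real.sqrt (spectrum ℝ T) := Real.continuous_sqrt.continuousOn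
  set G : H →L[ℂ] H := cfc Real.sqrt T with hG
  have hGsa : IsSelfAdjoint G := cfc_predicate Real.sqrt T
  have hGsq : G * G = T := by
    have h1 : cfc (fun x : ℝ => Real.sqrt x * Real.sqrt x) T = G * G := cfc_mul _ _ T
    have h2 : cfc (fun x : ℝ => Real.sqrt x * Real.sqrt x) T = cfc (id : ℝ → ℝ) T := by
      apply cfc_congr
      intro x hx
      have hx0 : (0 : ℝ) ≤ x := spectrum_nonneg_of_nonneg hTnonneg hx
      simp [Real.mul_self_sqrt hx0]
    rw [← h1, h2, cfc_id ℝ T]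
  have hGB : ∀ B ∈ A.commutant, Commute B G :=
    fun B hB => commute_cfc_of_commute hTsa (hTB B hB) Real.sqrt hsqrtCont
  have hGE : Commute E G := commute_cfc_of_commute hTsa hTE Real.sqrt hsqrtCont
  have hGξK : G ξ ∈ K := by
    have : E (G ξ) = G ξ := by
      calc E (G ξ) = (E * G) ξ := rfl
        _ = (G * E) ξ := by rw [hGE.eq]
        _ = G (E ξ) := rfl
        _ = G ξ := by rw [hEξ]
    rw [← this]; exact hEmem _
  -- reduce the goal to ⟪Tξ, Xξ⟫
  have hTξ : T ξ = G (G ξ) := by rw [← hGsq]; rfl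
  have hgoal : ⟪a ξ, a (E (X ξ))⟫ = ⟪T ξ, X ξ⟫ := by
    calc ⟪a ξ, a (E (X ξ))⟫
        = ⟪(ContinuousLinearMap.adjoint a) (a ξ), E (X ξ)⟫ := by
          rw [ContinuousLinearMap.adjoint_inner_left]
      _ = ⟪E ((ContinuousLinearMap.adjoint a) (a ξ)), X ξ⟫ := by
          have := (ContinuousLinearMap.isSelfAdjoint_iff_isSymmetric.mp hEsa)
            ((ContinuousLinearMap.adjoint a) (a ξ)) (X ξ)
          exact this.symm
      _ = ⟪T ξ, X ξ⟫ := by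
          congr 1
          rw [hT, hstarAE]
          show E ((ContinuousLinearMap.adjoint a) (a ξ))
            = ((E * star a) * (a * E)) ξ
          simp only [ContinuousLinearMap.mul_apply, ContinuousLinearMap.star_eq_adjoint, hEξ]
  -- approximate G ξ by vectors B ξ, B in the commutant
  have hGξcl : G ξ ∈ closure (Submodule.span ℂ S : Set H) := by
    rw [← Submodule.topologicalClosure_coe]; exact hGξK
  obtain ⟨u, hu, hulim⟩ := mem_closure_iff_seq_limit.mp hGξcl
  have hrep : ∀ v ∈ Submodule.span ℂ S, ∃ B ∈ A.commutant, B ξ = v := by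
    intro v hv
    induction hv using Submodule.span_induction with
    | mem x hx => obtain ⟨B, hB, rfl⟩ := hx; exact ⟨B, hB, rfl⟩
    | zero => exact ⟨0, zero_mem A.commutant, rfl⟩
    | add x y _ _ hx hy =>
      obtain ⟨B₁, hB₁, rfl⟩ := hx
      obtain ⟨B₂, hB₂, rfl⟩ := hy
      exact ⟨B₁ + B₂, add_mem hB₁ hB₂, rfl⟩
    | smul c x _ hx =>
      obtain ⟨B, hB, rfl⟩ := hx
      refine ⟨c • B, ?_, rfl⟩
      rw [VonNeumannAlgebra.mem_commutant_iff]
      intro g hg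
      have := VonNeumannAlgebra.mem_commutant_iff.mp hB g hg
      rw [mul_smul_comm, smul_mul_assoc, this]
  choose B hBmem hBξ using fun n => hrep (u n) (hu n)
  have hBlim : Filter.Tendsto (fun n => (B n) ξ) Filter.atTop (nhds (G ξ)) := by
    simpa [hBξ] using hulim
  -- star (B n) ξ also tends to G ξ
  have hstarBlim : Filter.Tendsto (fun n => (star (B n)) ξ) Filter.atTop (nhds (G ξ)) := by
    rw [tendsto_iff_norm_sub_tendsto_zero] at hBlim ⊢
    have heq : ∀ n, ‖(star (B n)) ξ - G ξ‖ = ‖(B n) ξ - G ξ‖ := by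
      intro n
      have hD : star (B n - G) * (B n - G) = (B n - G) * star (B n - G) := by
        have c1 : Commute (star (B n)) (B n) :=
          habelian _ (star_mem (hBmem n)) _ (hBmem n)
        have c2 : Commute (star (B n)) G := hGB _ (star_mem (hBmem n))
        have c3 : Commute G (B n) := (hGB _ (hBmem n)).symm
        have hcomm : Commute (star (B n) - G) (B n - G) :=
          (c1.sub_right c2).sub_left ((c3).sub_right (Commute.refl G))
        have hstarD : star (B n - G) = star (B n) - G := by
          rw [star_sub, hGsa.star_eq]
        rw [hstarD]
        exact hcomm.eq
      have := norm_star_apply_eq_of_normal hD ξ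
      rw [star_sub, hGsa.star_eq] at this
      simpa [ContinuousLinearMap.sub_apply] using this
    simpa [heq] using hBlim
  -- the two expressions for the limit
  have hterm : ∀ n, ⟪G ((B n) ξ), X ξ⟫ = ⟪G ξ, X ((star (B n)) ξ)⟫ := by
    intro n
    have hBnG : G ((B n) ξ) = (B n) (G ξ) := by
      calc G ((B n) ξ) = (G * B n) ξ := rfl
        _ = (B n * G) ξ := by rw [← (hGB _ (hBmem n)).eq]
        _ = (B n) (G ξ) := rfl
    have hXB : (star (B n)) (X ξ) = X ((star (B n)) ξ) := by
      have := hX _ (star_mem (hBmem n))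
      calc (star (B n)) (X ξ) = (star (B n) * X) ξ := rfl
        _ = (X * star (B n)) ξ := by rw [← this]
        _ = X ((star (B n)) ξ) := rfl
    calc ⟪G ((B n) ξ), X ξ⟫ = ⟪(B n) (G ξ), X ξ⟫ := by rw [hBnG]
      _ = ⟪G ξ, (ContinuousLinearMap.adjoint (B n)) (X ξ)⟫ := by
          rw [ContinuousLinearMap.adjoint_inner_right]
      _ = ⟪G ξ, (star (B n)) (X ξ)⟫ := by rw [ContinuousLinearMap.star_eq_adjoint]
      _ = ⟪G ξ, X ((star (B n)) ξ)⟫ := by rw [hXB]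
  have hlim1 : Filter.Tendsto (fun n => ⟪G ((B n) ξ), X ξ⟫) Filter.atTop
      (nhds ⟪G (G ξ), X ξ⟫) := by
    have hcont : Continuous fun w : H => ⟪G w, X ξ⟫ :=
      Continuous.inner (G.continuous) continuous_const
    exact (hcont.tendsto (G ξ)).comp hBlim
  have hlim2 : Filter.Tendsto (fun n => ⟪G ((B n) ξ), X ξ⟫) Filter.atTop
      (nhds ⟪G ξ, X (G ξ)⟫) := by
    have hcont : Continuous fun w : H => ⟪G ξ, X w⟫ :=
      Continuous.inner continuous_const (X.continuous)
    have := (hcont.tendsto (G ξ)).comp hstarBlim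
    simpa [hterm, Function.comp_def] using this
  have hkey : ⟪G (G ξ), X ξ⟫ = ⟪G ξ, X (G ξ)⟫ := tendsto_nhds_unique hlim1 hlim2
  show 0 ≤ ⟪a ξ, a (E (X ξ))⟫
  rw [hgoal, hTξ, hkey]
  exact hXpos (G ξ)
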